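/- Let λ ∈ ℂ with |λ| > 1. Partition a matrix D ∈ ℂ^{2n×2m} into four n×m blocks D = [[D₁₁, D₁₂],[D₂₁, D₂₂]]. Let V be the complex subspace of ℂ^{2n×2m} consisting of all such D with D₁₁ = 0, D₂₂ = 0, with D₂₁ nonzero only in its first column if n ≤ m (only in its last row if n > m), and with D₁₂ nonzero only in its last column if n ≤ m (only in its first row if n > m). Then for every pair (B,A) ∈ ℂ^{2n×2m} × ℂ^{2m×2n} there exists exactly one D ∈ V such that (B − D, A) ∈ T(H_m(λ), H_n(λ)); that is, ℂ^{2n×2m} × ℂ^{2m×2n} = T(H_m(λ), H_n(λ)) ⊕_ℝ (V × {0}). -/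

import Mathlib

open Matrix

/-- The `n×n` upper-triangular Jordan block with eigenvalue `l`. -/
noncomputable def Jmat (n : ℕ) (l : ℂ) : Matrix (Fin n) (Fin n) ℂ :=
  Matrix.of fun i j =>
    if (i : ℕ) = (j : ℕ) then l
    else if (j : ℕ) = (i : ℕ) + 1 then 1 else 0

/-- The symmetric matrix `Δ_n`: (1-based) entry `(j,k)` is `1` if `j+k = n+1`,
`i` if `j+k = n+2`, and `0` otherwise. -/
noncomputable def Dmat (n : ℕ) : Matrix (Fin n) (Fin n) ℂ :=
  Matrix.of fun i j =>
    if (i : ℕ) + (j : ℕ) + 1 = n then 1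
    else if (i : ℕ) + (j : ℕ) = n then Complex.I
    else 0

/-- The `2m×2m` block matrix `H_m(l) = [[0, I],[J_m(l), 0]]`. -/
noncomputable def Hmat (m : ℕ) (l : ℂ) : Matrix (Fin m ⊕ Fin m) (Fin m ⊕ Fin m) ℂ :=
  Matrix.fromBlocks 0 1 (Jmat m l) 0

/-- `T(A) = {CᴴA + AC}`, the tangent space to the *congruence class of `A`. -/
def Tset {n : Type*} [Fintype n] (A : Matrix n n ℂ) : Set (Matrix n n ℂ) :=
  {X | ∃ C : Matrix n n ℂ, X = Cᴴ * A + A * C}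

/-- `T(M,N) = {(SᴴM + NR, RᴴN + MS)}`. -/
def Tpair {p q : Type*} [Fintype p] [Fintype q]
    (M : Matrix p p ℂ) (N : Matrix q q ℂ) :
    Set (Matrix q p ℂ × Matrix p q ℂ) :=
  {X | ∃ (S : Matrix p q ℂ) (R : Matrix q p ℂ),
      X = (Sᴴ * M + N * R, Rᴴ * N + M * S)}


namespace Aux

noncomputable def Nmat (p : ℕ) : Matrix (Fin p) (Fin p) ℂ :=
  Matrix.of fun i j => if (j : ℕ) = (i : ℕ) + 1 then 1 else 0

lemma jmat_eq (p : ℕ) (l : ℂ) : Jmat p l = l • (1 : Matrix (Fin p) (Fin p) ℂ) + Nmat p := by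
  ext i j
  simp only [Jmat, Nmat, Matrix.add_apply, Matrix.smul_apply, Matrix.one_apply, Matrix.of_apply,
    smul_eq_mul]
  rcases eq_or_ne (i : ℕ) (j : ℕ) with h | h
  · have : i = j := Fin.ext h
    simp [this, h]
  · have : i ≠ j := fun hh => h (by rw [hh])
    simp [h, this]

lemma nmat_pow (p k : ℕ) (i j : Fin p) :
    ((Nmat p) ^ k) i j = if (j : ℕ) = (i : ℕ) + k then 1 else 0 := by
  induction k generalizing i with
  | zero =>
    simp only [pow_zero, Matrix.one_apply, Nat.add_zero]
    by_cases h : i = j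
    · simp [h]
    · have : (j : ℕ) ≠ (i : ℕ) := fun hh => h (Fin.ext hh.symm)
      simp [h, this]
  | succ k ih =>
    rw [pow_succ', Matrix.mul_apply]
    by_cases hlt : (i : ℕ) + 1 < p
    · rw [Finset.sum_eq_single (⟨(i : ℕ) + 1, hlt⟩ : Fin p)]
      · rw [ih]
        have h1 : Nmat p i ⟨(i : ℕ) + 1, hlt⟩ = 1 := by simp [Nmat]
        rw [h1, one_mul]
        have h2 : ((⟨(i : ℕ) + 1, hlt⟩ : Fin p) : ℕ) + k = (i : ℕ) + (k + 1) := by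
          simp; omega
        rw [h2]
      · intro t _ ht
        have : (t : ℕ) ≠ (i : ℕ) + 1 := by
          intro hh; exact ht (Fin.ext hh)
        simp [Nmat, this]
      · intro h; exact absurd (Finset.mem_univ _) h
    · have hz : ∀ t : Fin p, (Nmat p) i t * ((Nmat p) ^ k) t j = 0 := by
        intro t
        have : (t : ℕ) ≠ (i : ℕ) + 1 := by have := t.isLt; omega
        simp [Nmat, this]
      rw [Finset.sum_eq_zero fun t _ => hz t]
      have : (j : ℕ) ≠ (i : ℕ) + (k + 1) := by have := j.isLt; omega
      simp [this]

lemma nmat_nilpotent (p : ℕ) : IsNilpotent (Nmat p) := by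
  refine ⟨p, ?_⟩
  ext i j
  rw [nmat_pow]
  have : (j : ℕ) ≠ (i : ℕ) + p := by have := j.isLt; omega
  simp [this]

lemma jmat_sub_nilpotent (p : ℕ) (l : ℂ) :
    IsNilpotent (Jmat p l - l • (1 : Matrix (Fin p) (Fin p) ℂ)) := by
  rw [jmat_eq]; simpa using nmat_nilpotent p

lemma jmat_det (p : ℕ) (l : ℂ) : (Jmat p l).det = l ^ p := by
  have h : (Jmat p l).BlockTriangular id := by
    intro i j hij
    simp only [id] at hij
    have h1 : (i : ℕ) ≠ (j : ℕ) := by omega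
    have h2 : (j : ℕ) ≠ (i : ℕ) + 1 := by omega
    simp [Jmat, h1, h2]
  rw [Matrix.det_of_upperTriangular h]
  simp [Jmat]

lemma jmat_det_unit (p : ℕ) {l : ℂ} (hl : l ≠ 0) : IsUnit (Jmat p l).det := by
  rw [jmat_det]; exact (isUnit_iff_ne_zero).2 (pow_ne_zero _ hl)

end Aux


namespace Aux2

variable {p q : ℕ}

noncomputable def lmulE (P : Matrix (Fin p) (Fin p) ℂ) :
    Module.End ℂ (Matrix (Fin p) (Fin q) ℂ) where
  toFun W := P * W
  map_add' := Matrix.mul_add P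
  map_smul' c W := by simp [Matrix.mul_smul]

noncomputable def rmulE (Q : Matrix (Fin q) (Fin q) ℂ) :
    Module.End ℂ (Matrix (Fin p) (Fin q) ℂ) where
  toFun W := W * Q
  map_add' W V := Matrix.add_mul W V Q
  map_smul' c W := by simp [Matrix.smul_mul]

lemma lmulE_pow (P : Matrix (Fin p) (Fin p) ℂ) (k : ℕ) :
    (lmulE (q := q) P) ^ k = lmulE (P ^ k) := by
  induction k with
  | zero => ext W : 1; simp [lmulE]
  | succ k ih =>
    ext W : 1
    rw [pow_succ, pow_succ]
    simp only [Module.End.mul_apply, ih]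
    simp [lmulE, Matrix.mul_assoc]

lemma rmulE_pow (Q : Matrix (Fin q) (Fin q) ℂ) (k : ℕ) :
    (rmulE (p := p) Q) ^ k = rmulE (Q ^ k) := by
  induction k with
  | zero => ext W : 1; simp [rmulE]
  | succ k ih =>
    ext W : 1
    rw [pow_succ, pow_succ']
    simp only [Module.End.mul_apply, ih]
    simp [rmulE, Matrix.mul_assoc]

lemma lmulE_nilpotent {P : Matrix (Fin p) (Fin p) ℂ} (h : IsNilpotent P) :
    IsNilpotent (lmulE (q := q) P) := by
  obtain ⟨k, hk⟩ := h
  exact ⟨k, by rw [lmulE_pow, hk]; ext W : 1; simp [lmulE]⟩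

lemma rmulE_nilpotent {Q : Matrix (Fin q) (Fin q) ℂ} (h : IsNilpotent Q) :
    IsNilpotent (rmulE (p := p) Q) := by
  obtain ⟨k, hk⟩ := h
  exact ⟨k, by rw [rmulE_pow, hk]; ext W : 1; simp [rmulE]⟩

lemma lmulE_rmulE_comm (P : Matrix (Fin p) (Fin p) ℂ) (Q : Matrix (Fin q) (Fin q) ℂ) :
    Commute (lmulE (q := q) P) (rmulE (p := p) Q) := by
  unfold Commute SemiconjBy
  ext W : 1
  simp [lmulE, rmulE, Module.End.mul_apply, Matrix.mul_assoc]

lemma stein_surj (P : Matrix (Fin p) (Fin p) ℂ) (Q : Matrix (Fin q) (Fin q) ℂ)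
    (a b : ℂ) (hab : a * b ≠ 1)
    (hP : IsNilpotent (P - a • (1 : Matrix (Fin p) (Fin p) ℂ)))
    (hQ : IsNilpotent (Q - b • (1 : Matrix (Fin q) (Fin q) ℂ)))
    (E : Matrix (Fin p) (Fin q) ℂ) :
    ∃ W : Matrix (Fin p) (Fin q) ℂ, W - P * W * Q = E := by
  set L : Module.End ℂ (Matrix (Fin p) (Fin q) ℂ) := lmulE (P - a • 1) with hL
  set R : Module.End ℂ (Matrix (Fin p) (Fin q) ℂ) := rmulE (Q - b • 1) with hR
  have hLnil : IsNilpotent L := lmulE_nilpotent hP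
  have hRnil : IsNilpotent R := rmulE_nilpotent hQ
  have hcomm : Commute L R := lmulE_rmulE_comm _ _
  set h : Module.End ℂ (Matrix (Fin p) (Fin q) ℂ) := b • L + a • R + L * R with hh
  have hnil : IsNilpotent h := by
    have h1 : IsNilpotent (b • L) := hLnil.smul b
    have h2 : IsNilpotent (a • R) := hRnil.smul a
    have h3 : IsNilpotent (L * R) := hcomm.isNilpotent_mul_left hRnil
    have c12 : Commute (b • L) (a • R) := (hcomm.smul_left b).smul_right a
    have c13 : Commute (b • L) (L * R) :=
      (((Commute.refl L).mul_right hcomm).smul_left b)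
    have c23 : Commute (a • R) (L * R) :=
      ((hcomm.symm.mul_right (Commute.refl R)).smul_left a)
    have h23 : IsNilpotent (a • R + L * R) := Commute.isNilpotent_add c23 h2 h3
    rw [hh, add_assoc]
    exact Commute.isNilpotent_add (c12.add_right c13) h1 h23
  set f : Module.End ℂ (Matrix (Fin p) (Fin q) ℂ) := 1 - lmulE P * rmulE Q with hf
  have hPdec : lmulE (q := q) P = a • 1 + L := by
    ext W : 1
    simp [lmulE, hL, Matrix.sub_mul, Matrix.smul_mul]
  have hQdec : rmulE (p := p) Q = b • 1 + R := by
    ext W : 1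
    simp [rmulE, hR, Matrix.mul_sub, Matrix.mul_smul]
  have hfeq : f = (1 - a * b) • 1 - h := by
    rw [hf, hPdec, hQdec, hh]
    simp only [mul_add, add_mul, smul_mul_assoc, mul_smul_comm, one_mul, mul_one, smul_smul]
    module
  set c : ℂ := 1 - a * b with hc
  have hc0 : c ≠ 0 := sub_ne_zero.2 (Ne.symm hab)
  have hunit : IsUnit f := by
    rw [hfeq]
    have h1 : (c • (1 : Module.End ℂ (Matrix (Fin p) (Fin q) ℂ)) - h)
        = (c • 1) * (1 - c⁻¹ • h) := by
      simp only [mul_sub, mul_one, smul_mul_assoc, one_mul, smul_smul]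
      rw [mul_inv_cancel₀ hc0, one_smul]
    rw [h1]
    refine IsUnit.mul ?_ ((hnil.smul c⁻¹).isUnit_one_sub)
    have : (c • (1 : Module.End ℂ (Matrix (Fin p) (Fin q) ℂ))) = algebraMap ℂ _ c := by
      rw [Algebra.algebraMap_eq_smul_one]
    rw [this]
    exact (isUnit_iff_ne_zero.2 hc0).map _
  have hsurj : Function.Surjective f := ((Module.End.isUnit_iff f).1 hunit).2
  obtain ⟨W, hW⟩ := hsurj E
  refine ⟨W, ?_⟩
  have : f W = W - P * W * Q := by
    simp [hf, Module.End.mul_apply, lmulE, rmulE, Matrix.mul_assoc]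
  rw [← this, hW]

end Aux2



namespace Aux3

variable {p q : ℕ} {l : ℂ}

/-- The Sylvester operator `R ↦ J_p R - R J_q`. -/
noncomputable def Lsyl (p q : ℕ) (l : ℂ) (R : Matrix (Fin p) (Fin q) ℂ) :
    Matrix (Fin p) (Fin q) ℂ :=
  Jmat p l * R - R * Jmat q l

/-- ℕ-extension of a matrix by zero. -/
noncomputable def ext (R : Matrix (Fin p) (Fin q) ℂ) (a b : ℕ) : ℂ :=
  if h : a < p ∧ b < q then R ⟨a, h.1⟩ ⟨b, h.2⟩ else 0

lemma ext_of_ge_row (R : Matrix (Fin p) (Fin q) ℂ) {a : ℕ} (b : ℕ) (h : p ≤ a) :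
    ext R a b = 0 := by
  simp only [ext]
  rw [dif_neg]; omega

lemma ext_apply (R : Matrix (Fin p) (Fin q) ℂ) (i : Fin p) (j : Fin q) :
    ext R i j = R i j := by
  simp only [ext]
  rw [dif_pos ⟨i.isLt, j.isLt⟩]

lemma jmat_mul_apply (R : Matrix (Fin p) (Fin q) ℂ) (i : Fin p) (j : Fin q) :
    (Jmat p l * R) i j = l * R i j + ext R ((i : ℕ) + 1) (j : ℕ) := by
  rw [Matrix.mul_apply]
  by_cases hlt : (i : ℕ) + 1 < p
  · rw [Finset.sum_eq_add_of_mem i ⟨(i : ℕ) + 1, hlt⟩ (Finset.mem_univ _) (Finset.mem_univ _)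
      (by intro hh; exact absurd (congrArg (Fin.val) hh) (by simp)) ?_]
    · have h1 : Jmat p l i i = l := by simp [Jmat]
      have h2 : Jmat p l i ⟨(i : ℕ) + 1, hlt⟩ = 1 := by simp [Jmat]
      have h3 : ext R ((i : ℕ) + 1) (j : ℕ) = R ⟨(i : ℕ) + 1, hlt⟩ j := by
        simp only [ext]
        rw [dif_pos ⟨hlt, j.isLt⟩]
      rw [h1, h2, h3, one_mul]
    · intro t _ ht
      obtain ⟨ht1, ht2⟩ := not_or.1 (by simpa using ht)
      have e1 : (i : ℕ) ≠ (t : ℕ) := fun hh => ht1 (Fin.ext hh.symm)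
      have e2 : (t : ℕ) ≠ (i : ℕ) + 1 := by
        intro hh; apply ht2; exact Fin.ext (by simp [hh])
      simp [Jmat, e1, e2]
  · rw [ext_of_ge_row R _ (by omega), add_zero]
    rw [Finset.sum_eq_single i]
    · simp [Jmat]
    · intro t _ ht
      have e1 : (i : ℕ) ≠ (t : ℕ) := fun hh => ht (Fin.ext hh.symm)
      have e2 : (t : ℕ) ≠ (i : ℕ) + 1 := by have := t.isLt; omega
      simp [Jmat, e1, e2]
    · intro hh; exact absurd (Finset.mem_univ _) hh

lemma mul_jmat_apply (R : Matrix (Fin p) (Fin q) ℂ) (i : Fin p) (j : Fin q) :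
    (R * Jmat q l) i j = l * R i j +
      (if 1 ≤ (j : ℕ) then ext R (i : ℕ) ((j : ℕ) - 1) else 0) := by
  rw [Matrix.mul_apply]
  by_cases hj : 1 ≤ (j : ℕ)
  · have hlt : (j : ℕ) - 1 < q := by have := j.isLt; omega
    rw [Finset.sum_eq_add_of_mem j ⟨(j : ℕ) - 1, hlt⟩ (Finset.mem_univ _) (Finset.mem_univ _)
      (by intro hh; have := congrArg (Fin.val) hh; simp at this; omega) ?_]
    · have h1 : Jmat q l j j = l := by simp [Jmat]
      have h2 : Jmat q l ⟨(j : ℕ) - 1, hlt⟩ j = 1 := by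
        simp only [Jmat, Matrix.of_apply]
        rw [if_neg (show ¬((j : ℕ) - 1 = (j : ℕ)) by omega),
          if_pos (show (j : ℕ) = ((j : ℕ) - 1) + 1 by omega)]
      have h3 : ext R (i : ℕ) ((j : ℕ) - 1) = R i ⟨(j : ℕ) - 1, hlt⟩ := by
        simp only [ext]
        rw [dif_pos ⟨i.isLt, hlt⟩]
      rw [if_pos hj, h1, h2, h3, mul_one, mul_comm (R i j) l]
    · intro t _ ht
      obtain ⟨ht1, ht2⟩ := not_or.1 (by simpa using ht)
      have e1 : (t : ℕ) ≠ (j : ℕ) := fun hh => ht1 (Fin.ext hh)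
      have e2 : (j : ℕ) ≠ (t : ℕ) + 1 := by
        intro hh; apply ht2; apply Fin.ext; simp; omega
      rw [mul_eq_zero]; right
      simp [Jmat, e1, e2]
  · rw [if_neg hj, add_zero, Finset.sum_eq_single j]
    · simp [Jmat, mul_comm]
    · intro t _ ht
      have e1 : (t : ℕ) ≠ (j : ℕ) := fun hh => ht (Fin.ext hh)
      have e2 : (j : ℕ) ≠ (t : ℕ) + 1 := by omega
      rw [mul_eq_zero]; right
      simp [Jmat, e1, e2]
    · intro hh; exact absurd (Finset.mem_univ _) hh

lemma lsyl_apply (R : Matrix (Fin p) (Fin q) ℂ) (i : Fin p) (j : Fin q) :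
    Lsyl p q l R i j = ext R ((i : ℕ) + 1) (j : ℕ) -
      (if 1 ≤ (j : ℕ) then ext R (i : ℕ) ((j : ℕ) - 1) else 0) := by
  simp only [Lsyl, Matrix.sub_apply, jmat_mul_apply, mul_jmat_apply]
  ring

lemma lsyl_sub (R S : Matrix (Fin p) (Fin q) ℂ) :
    Lsyl p q l (R - S) = Lsyl p q l R - Lsyl p q l S := by
  simp only [Lsyl, Matrix.mul_sub, Matrix.sub_mul]
  abel

lemma lsyl_neg (R : Matrix (Fin p) (Fin q) ℂ) :
    Lsyl p q l (-R) = -(Lsyl p q l R) := by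
  simp only [Lsyl, Matrix.mul_neg, Matrix.neg_mul]
  abel

lemma syl_exists (p q : ℕ) (l : ℂ) (E : Matrix (Fin p) (Fin q) ℂ) :
    ∃ R : Matrix (Fin p) (Fin q) ℂ,
      ∀ (i : Fin p) (j : Fin q), 1 ≤ (j : ℕ) → Lsyl p q l R i j = E i j := by
  classical
  set rn : ℕ → ℕ → ℂ := fun a b => -∑ k ∈ Finset.range p, ext E (a + k) (b + 1 + k) with hrn
  have hrn_ge : ∀ a b, p ≤ a → rn a b = 0 := by
    intro a b ha
    simp only [hrn, neg_eq_zero]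
    exact Finset.sum_eq_zero fun k _ => ext_of_ge_row E _ (by omega)
  set R : Matrix (Fin p) (Fin q) ℂ := Matrix.of fun i j => rn (i : ℕ) (j : ℕ) with hR
  have hextR : ∀ a b, a ≤ p → b < q → ext R a b = rn a b := by
    intro a b ha hb
    rcases eq_or_lt_of_le ha with h | h
    · rw [ext_of_ge_row R _ (le_of_eq h.symm), hrn_ge _ _ (le_of_eq h.symm)]
    · simp only [ext]
      rw [dif_pos ⟨h, hb⟩]
      rfl
  refine ⟨R, fun i j hj => ?_⟩
  obtain ⟨p', hp'⟩ : ∃ p', p = p' + 1 := ⟨p - 1, by have := i.isLt; omega⟩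
  rw [lsyl_apply, if_pos hj, hextR _ _ (by have := i.isLt; omega) j.isLt,
    hextR _ _ (by have := i.isLt; omega) (by have := j.isLt; omega)]
  simp only [hrn]
  have key1 : ∑ k ∈ Finset.range p, ext E ((i : ℕ) + k) (((j : ℕ) - 1) + 1 + k)
      = ∑ k ∈ Finset.range p, ext E ((i : ℕ) + k) ((j : ℕ) + k) := by
    apply Finset.sum_congr rfl
    intro k _
    congr 1
    omega
  rw [key1]
  have hrange : Finset.range p = Finset.range (p' + 1) := by rw [hp']
  rw [hrange]
  rw [Finset.sum_range_succ' (fun k => ext E ((i : ℕ) + k) ((j : ℕ) + k)) p']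
  rw [Finset.sum_range_succ (fun k => ext E ((i : ℕ) + 1 + k) ((j : ℕ) + 1 + k)) p']
  have hz : ext E ((i : ℕ) + 1 + p') ((j : ℕ) + 1 + p') = 0 :=
    ext_of_ge_row E _ (by omega)
  have hc : ∀ k, ext E ((i : ℕ) + (k + 1)) ((j : ℕ) + (k + 1))
      = ext E ((i : ℕ) + 1 + k) ((j : ℕ) + 1 + k) := by
    intro k; congr 1 <;> omega
  simp only [hc, hz, add_zero, Nat.add_zero]
  rw [ext_apply]
  ring

lemma syl_zero_col (hpq : p ≤ q) (l : ℂ) (R : Matrix (Fin p) (Fin q) ℂ)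
    (h : ∀ (i : Fin p) (j : Fin q), 1 ≤ (j : ℕ) → Lsyl p q l R i j = 0) :
    Lsyl p q l R = 0 := by
  have step : ∀ a b : ℕ, b + 1 < q → ext R a b = ext R (a + 1) (b + 1) := by
    intro a b hb
    by_cases ha : a < p
    · have := h ⟨a, ha⟩ ⟨b + 1, hb⟩ (by simp)
      rw [lsyl_apply] at this
      simp only [if_pos (show 1 ≤ b + 1 by omega)] at this
      have h2 : b + 1 - 1 = b := by omega
      rw [h2] at this
      exact (sub_eq_zero.1 this).symm
    · rw [ext_of_ge_row R _ (by omega), ext_of_ge_row R _ (by omega)]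
  have chain : ∀ t a b : ℕ, b + t < q → ext R a b = ext R (a + t) (b + t) := by
    intro t
    induction t with
    | zero => intro a b _; simp
    | succ t ih =>
      intro a b hbt
      rw [step a b (by omega), ih (a + 1) (b + 1) (by omega)]
      congr 1 <;> omega
  ext i j
  rcases Nat.lt_or_ge 0 (j : ℕ) with hj | hj
  · rw [h i j hj]; rfl
  · have hj0 : (j : ℕ) = 0 := by omega
    rw [lsyl_apply]
    have hp0 : 0 < p := i.pos
    have hkey : ext R ((i : ℕ) + 1) (j : ℕ) = 0 := by
      rw [hj0]
      have h1 : (0 : ℕ) + (p - ((i : ℕ) + 1)) < q := by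
        have := i.isLt; omega
      rw [chain (p - ((i : ℕ) + 1)) ((i : ℕ) + 1) 0 h1]
      exact ext_of_ge_row R _ (by have := i.isLt; omega)
    rw [hkey, hj0]
    simp

lemma col_unique (hpq : p ≤ q) (l : ℂ) (E : Matrix (Fin p) (Fin q) ℂ) :
    ∃! Dc : Matrix (Fin p) (Fin q) ℂ,
      (∀ (i : Fin p) (j : Fin q), (j : ℕ) ≠ 0 → Dc i j = 0) ∧
      ∃ R, E - Dc = Lsyl p q l R := by
  obtain ⟨R, hR⟩ := syl_exists p q l E
  refine ⟨E - Lsyl p q l R, ⟨?_, R, by abel⟩, ?_⟩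
  · intro i j hj
    rw [Matrix.sub_apply, hR i j (by omega), sub_self]
  · rintro y ⟨hsupp, R', hR'⟩
    have hdiff : y - (E - Lsyl p q l R) = Lsyl p q l (R - R') := by
      rw [lsyl_sub, ← hR']
      abel
    have hzero : Lsyl p q l (R - R') = 0 := by
      apply syl_zero_col hpq
      intro i j hj
      rw [← hdiff]
      rw [Matrix.sub_apply, hsupp i j (by omega), Matrix.sub_apply,
        hR i j hj, sub_self]
      simp
    have := hdiff.trans hzero
    have := sub_eq_zero.1 this
    exact this

/-- Double-reversal transpose: `(flip X) i j = X (p-1-j) (q-1-i)`. -/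
noncomputable def flip (p q : ℕ) (X : Matrix (Fin p) (Fin q) ℂ) :
    Matrix (Fin q) (Fin p) ℂ :=
  Matrix.of fun i j =>
    X ⟨p - 1 - (j : ℕ), by have := j.isLt; omega⟩ ⟨q - 1 - (i : ℕ), by have := i.isLt; omega⟩

lemma flip_flip (X : Matrix (Fin p) (Fin q) ℂ) : flip q p (flip p q X) = X := by
  ext i j
  simp only [flip, Matrix.of_apply]
  congr 1 <;> apply Fin.ext <;> simp <;> [skip; skip] <;> omega

lemma flip_sub (X Y : Matrix (Fin p) (Fin q) ℂ) :
    flip p q (X - Y) = flip p q X - flip p q Y := rfl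

lemma ext_flip (X : Matrix (Fin p) (Fin q) ℂ) (a b : ℕ) :
    ext (flip p q X) a b =
      if h : a < q ∧ b < p then ext X (p - 1 - b) (q - 1 - a) else 0 := by
  by_cases h : a < q ∧ b < p
  · rw [dif_pos h]
    simp only [ext, flip]
    rw [dif_pos ⟨h.1, h.2⟩, dif_pos ⟨by omega, by omega⟩]
    rfl
  · rw [dif_neg h]
    simp only [ext]
    rw [dif_neg h]

lemma flip_lsyl (R : Matrix (Fin p) (Fin q) ℂ) :
    flip p q (Lsyl p q l R) = -(Lsyl q p l (flip p q R)) := by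
  ext i j
  have hi := i.isLt
  have hj := j.isLt
  have hp : 0 < p := by omega
  have hq : 0 < q := by omega
  rw [Matrix.neg_apply, lsyl_apply]
  simp only [ext_flip]
  simp only [flip, Matrix.of_apply]
  rw [lsyl_apply]
  simp only [Fin.val_mk]
  have e1 : p - 1 - (j : ℕ) + 1 = p - (j : ℕ) ∨ (j : ℕ) = 0 := by omega
  rw [neg_sub]
  by_cases hj1 : 1 ≤ (j : ℕ)
  · rw [if_pos hj1, dif_pos ⟨hi, by omega⟩]
    have e2 : p - 1 - ((j : ℕ) - 1) = p - (j : ℕ) := by omega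
    have e3 : p - 1 - (j : ℕ) + 1 = p - (j : ℕ) := by omega
    rw [e2, e3]
    congr 1
    · by_cases hi1 : 1 ≤ q - 1 - (i : ℕ)
      · rw [if_pos hi1, dif_pos ⟨by omega, hj⟩]
        have e4 : q - 1 - (i : ℕ) - 1 = q - 1 - ((i : ℕ) + 1) := by omega
        rw [e4]
      · rw [if_neg hi1, dif_neg (by omega)]
  · rw [if_neg hj1]
    have hj0 : (j : ℕ) = 0 := by omega
    have e3 : p - 1 - (j : ℕ) + 1 = p := by omega
    rw [e3, ext_of_ge_row R _ (le_refl p), zero_sub, zero_sub, neg_inj]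
    by_cases hi1 : 1 ≤ q - 1 - (i : ℕ)
    · rw [if_pos hi1, dif_pos ⟨by omega, hj⟩]
      have e4 : q - 1 - (i : ℕ) - 1 = q - 1 - ((i : ℕ) + 1) := by omega
      rw [e4]
    · rw [if_neg hi1, dif_neg (by omega)]

lemma row_unique (hqp : q ≤ p) (l : ℂ) (E : Matrix (Fin p) (Fin q) ℂ) :
    ∃! Dr : Matrix (Fin p) (Fin q) ℂ,
      (∀ (i : Fin p) (j : Fin q), (i : ℕ) + 1 ≠ p → Dr i j = 0) ∧
      ∃ R, E - Dr = Lsyl p q l R := by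
  obtain ⟨Dc, ⟨hcsupp, R', hR'⟩, huniq⟩ := col_unique hqp l (flip p q E)
  refine ⟨flip q p Dc, ⟨?_, ?_⟩, ?_⟩
  · intro i j hi
    show Dc ⟨q - 1 - (j : ℕ), _⟩ ⟨p - 1 - (i : ℕ), _⟩ = 0
    apply hcsupp
    simp only [Fin.val_mk]
    have := i.isLt
    omega
  · refine ⟨-(flip q p R'), ?_⟩
    have h1 : flip p q (E - flip q p Dc) = flip p q E - Dc := by
      rw [flip_sub, flip_flip]
    have h2 : E - flip q p Dc = flip q p (flip p q E - Dc) := by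
      rw [← h1, flip_flip]
    rw [h2, hR', flip_lsyl, lsyl_neg]
  · rintro y ⟨hysupp, R2, hy⟩
    have hcol : ∀ (i : Fin q) (j : Fin p), (j : ℕ) ≠ 0 → flip p q y i j = 0 := by
      intro i j hjne
      show y ⟨p - 1 - (j : ℕ), _⟩ ⟨q - 1 - (i : ℕ), _⟩ = 0
      apply hysupp
      simp only [Fin.val_mk]
      have := j.isLt
      omega
    have heq : flip p q E - flip p q y = Lsyl q p l (-(flip p q R2)) := by
      rw [lsyl_neg, ← flip_lsyl, ← hy, flip_sub]
    have := huniq (flip p q y) ⟨hcol, -(flip p q R2), heq⟩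
    rw [← flip_flip (X := y), this]

end Aux3
namespace Aux4
open Aux Aux2 Aux3

variable {m n p q r : ℕ} {l : ℂ}

lemma col_supp_mul_left (P : Matrix (Fin p) (Fin q) ℂ) (X : Matrix (Fin q) (Fin r) ℂ)
    (pred : Fin r → Prop) (h : ∀ i j, pred j → X i j = 0) :
    ∀ i j, pred j → (P * X) i j = 0 := by
  intro i j hj
  rw [Matrix.mul_apply]
  exact Finset.sum_eq_zero fun t _ => by rw [h t j hj, mul_zero]

lemma row_supp_mul_right (X : Matrix (Fin p) (Fin q) ℂ) (P : Matrix (Fin q) (Fin r) ℂ)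
    (pred : Fin p → Prop) (h : ∀ i j, pred i → X i j = 0) :
    ∀ i j, pred i → (X * P) i j = 0 := by
  intro i j hi
  rw [Matrix.mul_apply]
  exact Finset.sum_eq_zero fun t _ => by rw [h i t hi, zero_mul]

lemma conj_nilpotent {X : Matrix (Fin p) (Fin p) ℂ} (h : IsNilpotent X) :
    IsNilpotent Xᴴ := by
  have hpow : ∀ k, (Xᴴ) ^ k = (X ^ k)ᴴ := by
    intro k
    induction k with
    | zero => simp
    | succ k ih => rw [pow_succ, pow_succ', Matrix.conjTranspose_mul, ih]
  obtain ⟨k, hk⟩ := h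
  refine ⟨k, ?_⟩
  rw [hpow, hk]
  simp

lemma hl_ne_one {l : ℂ} (hl : 1 < ‖l‖) : (starRingEnd ℂ) l * l ≠ 1 := by
  intro h
  have := congrArg norm h
  rw [norm_mul, norm_one, Complex.norm_conj] at this
  nlinarith

lemma hl_ne_one' {l : ℂ} (hl : 1 < ‖l‖) : l * (starRingEnd ℂ) l ≠ 1 := by
  rw [mul_comm]; exact hl_ne_one hl

lemma hl_ne_zero {l : ℂ} (hl : 1 < ‖l‖) : l ≠ 0 := by
  intro h; rw [h] at hl; simp at hl; linarith

lemma jmat_conj_nil (p : ℕ) (l : ℂ) :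
    IsNilpotent ((Jmat p l)ᴴ - (starRingEnd ℂ) l • (1 : Matrix (Fin p) (Fin p) ℂ)) := by
  have : (Jmat p l)ᴴ - (starRingEnd ℂ) l • (1 : Matrix (Fin p) (Fin p) ℂ)
      = (Jmat p l - l • 1)ᴴ := by
    rw [Matrix.conjTranspose_sub, Matrix.conjTranspose_smul]
    simp
  rw [this]
  exact conj_nilpotent (jmat_sub_nilpotent p l)

lemma q1_always (hl : 1 < ‖l‖) (X : Matrix (Fin n) (Fin m) ℂ)
    (Y : Matrix (Fin m) (Fin n) ℂ) :
    ∃ (S : Matrix (Fin m) (Fin n) ℂ) (R : Matrix (Fin n) (Fin m) ℂ),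
      X = Sᴴ * Jmat m l + R ∧ Y = Rᴴ * Jmat n l + S := by
  obtain ⟨S, hS⟩ := stein_surj ((Jmat m l)ᴴ) (Jmat n l) ((starRingEnd ℂ) l) l
    (hl_ne_one hl) (jmat_conj_nil m l) (jmat_sub_nilpotent n l) (Y - Xᴴ * Jmat n l)
  refine ⟨S, X - Sᴴ * Jmat m l, by abel, ?_⟩
  have h1 : (X - Sᴴ * Jmat m l)ᴴ = Xᴴ - (Jmat m l)ᴴ * S := by
    rw [Matrix.conjTranspose_sub, Matrix.conjTranspose_mul, Matrix.conjTranspose_conjTranspose]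
  rw [h1, Matrix.sub_mul]
  have h2 : (Jmat m l)ᴴ * S * Jmat n l = S - (Y - Xᴴ * Jmat n l) := by
    rw [← hS]; abel
  rw [h2]
  abel

lemma q2_always (hl : 1 < ‖l‖) (X : Matrix (Fin n) (Fin m) ℂ)
    (Y : Matrix (Fin m) (Fin n) ℂ) :
    ∃ (S : Matrix (Fin m) (Fin n) ℂ) (R : Matrix (Fin n) (Fin m) ℂ),
      X = Sᴴ + Jmat n l * R ∧ Y = Rᴴ + Jmat m l * S := by
  obtain ⟨W, hW⟩ := stein_surj (Jmat m l) ((Jmat n l)ᴴ) l ((starRingEnd ℂ) l)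
    (hl_ne_one' hl) (jmat_sub_nilpotent m l) (jmat_conj_nil n l) (Y - Jmat m l * Xᴴ)
  refine ⟨Xᴴ - W * (Jmat n l)ᴴ, Wᴴ, ?_, ?_⟩
  · rw [Matrix.conjTranspose_sub, Matrix.conjTranspose_mul, Matrix.conjTranspose_conjTranspose,
      Matrix.conjTranspose_conjTranspose]
    abel
  · rw [Matrix.conjTranspose_conjTranspose, Matrix.mul_sub]
    have h2 : Jmat m l * (W * (Jmat n l)ᴴ) = Jmat m l * W * (Jmat n l)ᴴ := by
      rw [Matrix.mul_assoc]
    rw [h2]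
    have h3 : Jmat m l * W * (Jmat n l)ᴴ = W - (Y - Jmat m l * Xᴴ) := by
      rw [← hW]; abel
    rw [h3]
    abel

lemma q3_iff (X : Matrix (Fin n) (Fin m) ℂ) (Y : Matrix (Fin m) (Fin n) ℂ) :
    (∃ (S : Matrix (Fin m) (Fin n) ℂ) (R : Matrix (Fin n) (Fin m) ℂ),
      X = Sᴴ * Jmat m l + Jmat n l * R ∧ Y = Rᴴ + S) ↔
    ∃ R, X - Yᴴ * Jmat m l = Lsyl n m l R := by
  constructor
  · rintro ⟨S, R, h1, h2⟩
    refine ⟨R, ?_⟩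
    have hY : Yᴴ = R + Sᴴ := by
      rw [h2, Matrix.conjTranspose_add, Matrix.conjTranspose_conjTranspose]
    rw [h1, hY, Matrix.add_mul, Lsyl]
    abel
  · rintro ⟨R, hR⟩
    refine ⟨Y - Rᴴ, R, ?_, by abel⟩
    have h1 : (Y - Rᴴ)ᴴ = Yᴴ - R := by
      rw [Matrix.conjTranspose_sub, Matrix.conjTranspose_conjTranspose]
    rw [h1, Matrix.sub_mul]
    have h2 : Jmat n l * R = Lsyl n m l R + R * Jmat m l := by
      rw [Lsyl]; abel
    rw [h2, ← hR]
    abel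

lemma q4_iff (X : Matrix (Fin n) (Fin m) ℂ) (Y : Matrix (Fin m) (Fin n) ℂ) :
    (∃ (S : Matrix (Fin m) (Fin n) ℂ) (R : Matrix (Fin n) (Fin m) ℂ),
      X = Sᴴ + R ∧ Y = Rᴴ * Jmat n l + Jmat m l * S) ↔
    ∃ S, Y - Xᴴ * Jmat n l = Lsyl m n l S := by
  constructor
  · rintro ⟨S, R, h1, h2⟩
    refine ⟨S, ?_⟩
    have hX : Xᴴ = S + Rᴴ := by
      rw [h1, Matrix.conjTranspose_add, Matrix.conjTranspose_conjTranspose]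
    rw [h2, hX, Matrix.add_mul, Lsyl]
    abel
  · rintro ⟨S, hS⟩
    refine ⟨S, X - Sᴴ, by abel, ?_⟩
    have h1 : (X - Sᴴ)ᴴ = Xᴴ - S := by
      rw [Matrix.conjTranspose_sub, Matrix.conjTranspose_conjTranspose]
    rw [h1, Matrix.sub_mul]
    have h2 : S * Jmat n l = Jmat m l * S - Lsyl m n l S := by
      rw [Lsyl]; abel
    rw [h2, ← hS]
    abel

end Aux4

namespace Aux5
open Aux Aux2 Aux3 Aux4

variable {m n : ℕ} {l : ℂ}

lemma lsyl_add {p q : ℕ} (l : ℂ) (R S : Matrix (Fin p) (Fin q) ℂ) :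
    Lsyl p q l (R + S) = Lsyl p q l R + Lsyl p q l S := by
  simp only [Lsyl, Matrix.mul_add, Matrix.add_mul]
  abel

lemma d21_unique (hl : 1 < ‖l‖) (E3 : Matrix (Fin n) (Fin m) ℂ) :
    ∃! D21 : Matrix (Fin n) (Fin m) ℂ,
      ((n ≤ m → ∀ (i : Fin n) (j : Fin m), (j : ℕ) ≠ 0 → D21 i j = 0) ∧
       (m < n → ∀ (i : Fin n) (j : Fin m), (i : ℕ) + 1 ≠ n → D21 i j = 0)) ∧
      ∃ R, E3 - D21 = Lsyl n m l R := by
  rcases le_or_gt n m with hnm | hmn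
  · have := col_unique hnm l E3
    refine (existsUnique_congr fun D => ?_).1 this
    constructor
    · rintro ⟨hs, hR⟩
      exact ⟨⟨fun _ => hs, fun h => absurd h (by omega)⟩, hR⟩
    · rintro ⟨⟨hs, _⟩, hR⟩
      exact ⟨hs hnm, hR⟩
  · have := row_unique (le_of_lt hmn) l E3
    refine (existsUnique_congr fun D => ?_).1 this
    constructor
    · rintro ⟨hs, hR⟩
      exact ⟨⟨fun h => absurd h (by omega), fun _ => hs⟩, hR⟩
    · rintro ⟨⟨_, hs⟩, hR⟩
      exact ⟨hs hmn, hR⟩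

lemma d12_unique (hl : 1 < ‖l‖) (E4 : Matrix (Fin m) (Fin n) ℂ) :
    ∃! D12 : Matrix (Fin n) (Fin m) ℂ,
      ((n ≤ m → ∀ (i : Fin n) (j : Fin m), (j : ℕ) + 1 ≠ m → D12 i j = 0) ∧
       (m < n → ∀ (i : Fin n) (j : Fin m), (i : ℕ) ≠ 0 → D12 i j = 0)) ∧
      ∃ S, E4 + D12ᴴ * Jmat n l = Lsyl m n l S := by
  have hdetn : IsUnit (Jmat n l).det := jmat_det_unit n (hl_ne_zero hl)
  have hdetm : IsUnit (Jmat m l).det := jmat_det_unit m (hl_ne_zero hl)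
  rcases le_or_gt n m with hnm | hmn
  · -- use last-row complement on m × n matrices
    obtain ⟨Dr, ⟨hrsupp, R', hR'⟩, huniq⟩ := row_unique hnm l E4
    refine ⟨(-(Dr * (Jmat n l)⁻¹))ᴴ, ⟨⟨fun _ => ?_, fun h => absurd h (by omega)⟩, ?_⟩, ?_⟩
    · intro i j hj
      rw [Matrix.conjTranspose_apply, Matrix.neg_apply]
      rw [row_supp_mul_right Dr (Jmat n l)⁻¹ (fun a => (a : ℕ) + 1 ≠ m) hrsupp j i hj]
      simp
    · refine ⟨R', ?_⟩
      rw [Matrix.conjTranspose_conjTranspose, Matrix.neg_mul,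
        Matrix.nonsing_inv_mul_cancel_right _ _ hdetn]
      rw [← hR']
      abel
    · rintro y ⟨⟨hysupp, _⟩, S, hS⟩
      have hy : ∀ (i : Fin m) (j : Fin n), (i : ℕ) + 1 ≠ m → (-(yᴴ * Jmat n l)) i j = 0 := by
        intro i j hi
        rw [Matrix.neg_apply]
        rw [row_supp_mul_right yᴴ (Jmat n l) (fun a => (a : ℕ) + 1 ≠ m)
          (fun a b ha => by rw [Matrix.conjTranspose_apply, hysupp hnm b a (by omega)]; simp)
          i j hi]
        simp
      have heq : E4 - (-(yᴴ * Jmat n l)) = Lsyl m n l S := by rw [← hS]; abel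
      have := huniq (-(yᴴ * Jmat n l)) ⟨hy, S, heq⟩
      have hyt : yᴴ = -(Dr * (Jmat n l)⁻¹) := by
        rw [← this]
        rw [Matrix.neg_mul, neg_neg, Matrix.mul_nonsing_inv_cancel_right _ _ hdetn]
      rw [← Matrix.conjTranspose_conjTranspose (M := y), hyt]
  · -- use first-column complement on m × n matrices
    obtain ⟨Dc, ⟨hcsupp, R', hR'⟩, huniq⟩ := col_unique (le_of_lt hmn) l E4
    have key : ∀ X : Matrix (Fin m) (Fin n) ℂ,
        (∃ S, E4 + X * Jmat n l = Lsyl m n l S) ↔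
        (∃ S, E4 + Jmat m l * X = Lsyl m n l S) := by
      intro X
      have hid : X * Jmat n l = Jmat m l * X - Lsyl m n l X := by rw [Lsyl]; abel
      constructor
      · rintro ⟨S, hS⟩
        refine ⟨S + X, ?_⟩
        rw [lsyl_add, ← hS, hid]
        abel
      · rintro ⟨S, hS⟩
        refine ⟨S - X, ?_⟩
        rw [lsyl_sub, ← hS, hid]
        abel
    refine ⟨(-(Jmat m l)⁻¹ * Dc)ᴴ, ⟨⟨fun h => absurd h (by omega), fun _ => ?_⟩, ?_⟩, ?_⟩
    · intro i j hi
      rw [Matrix.conjTranspose_apply, Matrix.neg_mul]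
      rw [Matrix.neg_apply]
      rw [col_supp_mul_left (Jmat m l)⁻¹ Dc (fun a => (a : ℕ) ≠ 0) hcsupp j i hi]
      simp
    · rw [(key _)]
      refine ⟨R', ?_⟩
      rw [Matrix.conjTranspose_conjTranspose, Matrix.neg_mul, Matrix.mul_neg,
        Matrix.mul_nonsing_inv_cancel_left _ _ hdetm]
      rw [← hR']
      abel
    · rintro y ⟨⟨_, hysupp⟩, hS⟩
      rw [key _] at hS
      obtain ⟨S, hS⟩ := hS
      have hy : ∀ (i : Fin m) (j : Fin n), (j : ℕ) ≠ 0 → (-(Jmat m l * yᴴ)) i j = 0 := by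
        intro i j hj
        rw [Matrix.neg_apply]
        rw [col_supp_mul_left (Jmat m l) yᴴ (fun a => (a : ℕ) ≠ 0)
          (fun a b hb => by rw [Matrix.conjTranspose_apply, hysupp hmn b a hb]; simp)
          i j hj]
        simp
      have heq : E4 - (-(Jmat m l * yᴴ)) = Lsyl m n l S := by rw [← hS]; abel
      have := huniq (-(Jmat m l * yᴴ)) ⟨hy, S, heq⟩
      have hyt : yᴴ = -(Jmat m l)⁻¹ * Dc := by
        rw [← this]
        rw [Matrix.neg_mul, Matrix.mul_neg, neg_neg,
          Matrix.nonsing_inv_mul_cancel_left _ _ hdetm]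
      rw [← Matrix.conjTranspose_conjTranspose (M := y), hyt]

end Aux5

namespace Aux6
open Aux Aux2 Aux3 Aux4 Aux5

variable {m n : ℕ} {l : ℂ}

lemma hmat_comb (S : Matrix (Fin m ⊕ Fin m) (Fin n ⊕ Fin n) ℂ)
    (R : Matrix (Fin n ⊕ Fin n) (Fin m ⊕ Fin m) ℂ) :
    Sᴴ * Hmat m l + Hmat n l * R = Matrix.fromBlocks
      (S.toBlocks₂₁ᴴ * Jmat m l + R.toBlocks₂₁)
      (S.toBlocks₁₁ᴴ + R.toBlocks₂₂)
      (S.toBlocks₂₂ᴴ * Jmat m l + Jmat n l * R.toBlocks₁₁)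
      (S.toBlocks₁₂ᴴ + Jmat n l * R.toBlocks₁₂) := by
  nth_rewrite 1 [← Matrix.fromBlocks_toBlocks S]
  nth_rewrite 1 [← Matrix.fromBlocks_toBlocks R]
  simp only [Hmat]
  rw [Matrix.fromBlocks_conjTranspose, Matrix.fromBlocks_multiply,
    Matrix.fromBlocks_multiply, Matrix.fromBlocks_add]
  congr 1 <;> simp

lemma hmat_comb2 (S : Matrix (Fin m ⊕ Fin m) (Fin n ⊕ Fin n) ℂ)
    (R : Matrix (Fin n ⊕ Fin n) (Fin m ⊕ Fin m) ℂ) :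
    Rᴴ * Hmat n l + Hmat m l * S = Matrix.fromBlocks
      (R.toBlocks₂₁ᴴ * Jmat n l + S.toBlocks₂₁)
      (R.toBlocks₁₁ᴴ + S.toBlocks₂₂)
      (R.toBlocks₂₂ᴴ * Jmat n l + Jmat m l * S.toBlocks₁₁)
      (R.toBlocks₁₂ᴴ + Jmat m l * S.toBlocks₁₂) := by
  nth_rewrite 1 [← Matrix.fromBlocks_toBlocks S]
  nth_rewrite 1 [← Matrix.fromBlocks_toBlocks R]
  simp only [Hmat]
  rw [Matrix.fromBlocks_conjTranspose, Matrix.fromBlocks_multiply,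
    Matrix.fromBlocks_multiply, Matrix.fromBlocks_add]
  congr 1 <;> simp

lemma tpair_iff (X : Matrix (Fin n ⊕ Fin n) (Fin m ⊕ Fin m) ℂ)
    (A : Matrix (Fin m ⊕ Fin m) (Fin n ⊕ Fin n) ℂ) :
    (X, A) ∈ Tpair (Hmat m l) (Hmat n l) ↔
      ((∃ (S : Matrix (Fin m) (Fin n) ℂ) (R : Matrix (Fin n) (Fin m) ℂ),
          X.toBlocks₁₁ = Sᴴ * Jmat m l + R ∧ A.toBlocks₁₁ = Rᴴ * Jmat n l + S) ∧
       (∃ (S : Matrix (Fin m) (Fin n) ℂ) (R : Matrix (Fin n) (Fin m) ℂ),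
          X.toBlocks₂₂ = Sᴴ + Jmat n l * R ∧ A.toBlocks₂₂ = Rᴴ + Jmat m l * S) ∧
       (∃ (S : Matrix (Fin m) (Fin n) ℂ) (R : Matrix (Fin n) (Fin m) ℂ),
          X.toBlocks₂₁ = Sᴴ * Jmat m l + Jmat n l * R ∧ A.toBlocks₁₂ = Rᴴ + S) ∧
       (∃ (S : Matrix (Fin m) (Fin n) ℂ) (R : Matrix (Fin n) (Fin m) ℂ),
          X.toBlocks₁₂ = Sᴴ + R ∧ A.toBlocks₂₁ = Rᴴ * Jmat n l + Jmat m l * S)) := by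
  constructor
  · rintro ⟨S, R, hSR⟩
    have hX : X = Sᴴ * Hmat m l + Hmat n l * R := congrArg Prod.fst hSR
    have hA : A = Rᴴ * Hmat n l + Hmat m l * S := congrArg Prod.snd hSR
    rw [hmat_comb] at hX
    rw [hmat_comb2] at hA
    refine ⟨⟨S.toBlocks₂₁, R.toBlocks₂₁, ?_, ?_⟩,
            ⟨S.toBlocks₁₂, R.toBlocks₁₂, ?_, ?_⟩,
            ⟨S.toBlocks₂₂, R.toBlocks₁₁, ?_, ?_⟩,
            ⟨S.toBlocks₁₁, R.toBlocks₂₂, ?_, ?_⟩⟩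
    · rw [hX]; simp
    · rw [hA]; simp
    · rw [hX]; simp
    · rw [hA]; simp
    · rw [hX]; simp
    · rw [hA]; simp
    · rw [hX]; simp
    · rw [hA]; simp
  · rintro ⟨⟨s1, r1, h1x, h1a⟩, ⟨s2, r2, h2x, h2a⟩, ⟨s3, r3, h3x, h3a⟩, ⟨s4, r4, h4x, h4a⟩⟩
    refine ⟨Matrix.fromBlocks s4 s2 s1 s3, Matrix.fromBlocks r3 r2 r1 r4, ?_⟩
    have hX : X = (Matrix.fromBlocks s4 s2 s1 s3)ᴴ * Hmat m l
        + Hmat n l * (Matrix.fromBlocks r3 r2 r1 r4) := by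
      rw [hmat_comb]
      rw [← Matrix.fromBlocks_toBlocks X]
      simp only [Matrix.toBlocks_fromBlocks₁₁, Matrix.toBlocks_fromBlocks₁₂,
        Matrix.toBlocks_fromBlocks₂₁, Matrix.toBlocks_fromBlocks₂₂]
      rw [← h1x, ← h2x, ← h3x, ← h4x]
    have hA : A = (Matrix.fromBlocks r3 r2 r1 r4)ᴴ * Hmat n l
        + Hmat m l * (Matrix.fromBlocks s4 s2 s1 s3) := by
      rw [hmat_comb2]
      rw [← Matrix.fromBlocks_toBlocks A]
      simp only [Matrix.toBlocks_fromBlocks₁₁, Matrix.toBlocks_fromBlocks₁₂,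
        Matrix.toBlocks_fromBlocks₂₁, Matrix.toBlocks_fromBlocks₂₂]
      rw [← h1a, ← h2a, ← h3a, ← h4a]
    exact Prod.ext (by rw [← hX]) (by rw [← hA])

lemma toBlocks_sub₁₁ (X Y : Matrix (Fin n ⊕ Fin n) (Fin m ⊕ Fin m) ℂ) :
    (X - Y).toBlocks₁₁ = X.toBlocks₁₁ - Y.toBlocks₁₁ := rfl
lemma toBlocks_sub₁₂ (X Y : Matrix (Fin n ⊕ Fin n) (Fin m ⊕ Fin m) ℂ) :
    (X - Y).toBlocks₁₂ = X.toBlocks₁₂ - Y.toBlocks₁₂ := rfl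
lemma toBlocks_sub₂₁ (X Y : Matrix (Fin n ⊕ Fin n) (Fin m ⊕ Fin m) ℂ) :
    (X - Y).toBlocks₂₁ = X.toBlocks₂₁ - Y.toBlocks₂₁ := rfl
lemma toBlocks_sub₂₂ (X Y : Matrix (Fin n ⊕ Fin n) (Fin m ⊕ Fin m) ℂ) :
    (X - Y).toBlocks₂₂ = X.toBlocks₂₂ - Y.toBlocks₂₂ := rfl

end Aux6


/-- For `|λ| > 1`: `ℂ^{2n×2m} × ℂ^{2m×2n} = T(H_m(λ), H_n(λ)) ⊕_ℝ (V × {0})`,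
where `D = [[D₁₁,D₁₂],[D₂₁,D₂₂]] ∈ V` iff `D₁₁ = D₂₂ = 0`, `D₂₁` is supported in
its first column if `n ≤ m` (its last row if `n > m`), and `D₁₂` is supported in
its last column if `n ≤ m` (its first row if `n > m`). -/
theorem stmt12 (m n : ℕ) (l : ℂ) (hl : 1 < ‖l‖)
    (B : Matrix (Fin n ⊕ Fin n) (Fin m ⊕ Fin m) ℂ)
    (A : Matrix (Fin m ⊕ Fin m) (Fin n ⊕ Fin n) ℂ) :
    ∃! D : Matrix (Fin n ⊕ Fin n) (Fin m ⊕ Fin m) ℂ,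
      (D.toBlocks₁₁ = 0 ∧ D.toBlocks₂₂ = 0 ∧
       (n ≤ m →
          (∀ (i : Fin n) (j : Fin m), (j : ℕ) ≠ 0 → D.toBlocks₂₁ i j = 0) ∧
          (∀ (i : Fin n) (j : Fin m), (j : ℕ) + 1 ≠ m → D.toBlocks₁₂ i j = 0)) ∧
       (m < n →
          (∀ (i : Fin n) (j : Fin m), (i : ℕ) + 1 ≠ n → D.toBlocks₂₁ i j = 0) ∧
          (∀ (i : Fin n) (j : Fin m), (i : ℕ) ≠ 0 → D.toBlocks₁₂ i j = 0))) ∧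
      (B - D, A) ∈ Tpair (Hmat m l) (Hmat n l) := by
  classical
  open Aux Aux2 Aux3 Aux4 Aux5 Aux6 in
  obtain ⟨d21, hd21, hd21u⟩ := d21_unique hl (B.toBlocks₂₁ - A.toBlocks₁₂ᴴ * Jmat m l)
  obtain ⟨d12, hd12, hd12u⟩ := d12_unique hl (A.toBlocks₂₁ - B.toBlocks₁₂ᴴ * Jmat n l)
  have key : ∀ D : Matrix (Fin n ⊕ Fin n) (Fin m ⊕ Fin m) ℂ,
      ((D.toBlocks₁₁ = 0 ∧ D.toBlocks₂₂ = 0 ∧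
       (n ≤ m →
          (∀ (i : Fin n) (j : Fin m), (j : ℕ) ≠ 0 → D.toBlocks₂₁ i j = 0) ∧
          (∀ (i : Fin n) (j : Fin m), (j : ℕ) + 1 ≠ m → D.toBlocks₁₂ i j = 0)) ∧
       (m < n →
          (∀ (i : Fin n) (j : Fin m), (i : ℕ) + 1 ≠ n → D.toBlocks₂₁ i j = 0) ∧
          (∀ (i : Fin n) (j : Fin m), (i : ℕ) ≠ 0 → D.toBlocks₁₂ i j = 0))) ∧
      (B - D, A) ∈ Tpair (Hmat m l) (Hmat n l)) ↔
      (D.toBlocks₁₁ = 0 ∧ D.toBlocks₂₂ = 0 ∧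
       ((n ≤ m → ∀ (i : Fin n) (j : Fin m), (j : ℕ) ≠ 0 → D.toBlocks₂₁ i j = 0) ∧
        (m < n → ∀ (i : Fin n) (j : Fin m), (i : ℕ) + 1 ≠ n → D.toBlocks₂₁ i j = 0)) ∧
       ((n ≤ m → ∀ (i : Fin n) (j : Fin m), (j : ℕ) + 1 ≠ m → D.toBlocks₁₂ i j = 0) ∧
        (m < n → ∀ (i : Fin n) (j : Fin m), (i : ℕ) ≠ 0 → D.toBlocks₁₂ i j = 0)) ∧
       (∃ R, (B.toBlocks₂₁ - A.toBlocks₁₂ᴴ * Jmat m l) - D.toBlocks₂₁ = Aux3.Lsyl n m l R) ∧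
       (∃ S, (A.toBlocks₂₁ - B.toBlocks₁₂ᴴ * Jmat n l) + (D.toBlocks₁₂)ᴴ * Jmat n l
          = Aux3.Lsyl m n l S)) := by
    intro D
    have e3 : (B - D).toBlocks₂₁ - A.toBlocks₁₂ᴴ * Jmat m l
        = (B.toBlocks₂₁ - A.toBlocks₁₂ᴴ * Jmat m l) - D.toBlocks₂₁ := by
      rw [toBlocks_sub₂₁]; abel
    have e4 : A.toBlocks₂₁ - ((B - D).toBlocks₁₂)ᴴ * Jmat n l
        = (A.toBlocks₂₁ - B.toBlocks₁₂ᴴ * Jmat n l) + (D.toBlocks₁₂)ᴴ * Jmat n l := by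
      rw [toBlocks_sub₁₂, Matrix.conjTranspose_sub, Matrix.sub_mul]
      abel
    constructor
    · rintro ⟨⟨h11, h22, hle, hgt⟩, hmem⟩
      rw [tpair_iff] at hmem
      obtain ⟨-, -, h3, h4⟩ := hmem
      refine ⟨h11, h22, ⟨fun h => (hle h).1, fun h => (hgt h).1⟩,
        ⟨fun h => (hle h).2, fun h => (hgt h).2⟩, ?_, ?_⟩
      · obtain ⟨R, hR⟩ := (q3_iff _ _).1 h3
        exact ⟨R, by rw [← e3, hR]⟩
      · obtain ⟨S, hS⟩ := (q4_iff _ _).1 h4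
        exact ⟨S, by rw [← e4, hS]⟩
    · rintro ⟨h11, h22, hc21, hc12, ⟨R3, hR3⟩, ⟨S4, hS4⟩⟩
      refine ⟨⟨h11, h22, fun h => ⟨hc21.1 h, hc12.1 h⟩, fun h => ⟨hc21.2 h, hc12.2 h⟩⟩, ?_⟩
      rw [tpair_iff]
      refine ⟨q1_always hl _ _, q2_always hl _ _, ?_, ?_⟩
      · exact (q3_iff _ _).2 ⟨R3, by rw [e3, hR3]⟩
      · exact (q4_iff _ _).2 ⟨S4, by rw [e4, hS4]⟩
  refine ⟨Matrix.fromBlocks 0 d12 d21 0, ?_, ?_⟩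
  · refine (key _).2 ?_
    simp only [Matrix.toBlocks_fromBlocks₁₁, Matrix.toBlocks_fromBlocks₁₂,
      Matrix.toBlocks_fromBlocks₂₁, Matrix.toBlocks_fromBlocks₂₂]
    exact ⟨trivial, trivial, hd21.1, hd12.1, hd21.2, hd12.2⟩
  · intro D' hD'
    obtain ⟨h11, h22, hc21, hc12, hp3, hp4⟩ := (key D').1 hD'
    have e21 : D'.toBlocks₂₁ = d21 := hd21u _ ⟨hc21, hp3⟩
    have e12 : D'.toBlocks₁₂ = d12 := hd12u _ ⟨hc12, hp4⟩
    rw [← Matrix.fromBlocks_toBlocks D', h11, h22, e21, e12]
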